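/- Consider Distributed-SGDA A(T,K,W) with constant step size η^t_k = η and every local loss f_i G-Lipschitz, with λ := ‖W − P_m‖₂ < 1. Then for every realization of the random sample indices, every round t ≥ 1 and every local step 0 ≤ k ≤ K, the consensus term satisfies Δ^t_k ≤ η·G·√( (1/(1−λ))·( k² + (2λ/(1−λ²))·K² ) ). -/

import Mathlib

open MeasureTheory Finset
open scoped RealInnerProductSpace ENNReal

noncomputable section

abbrev Vec (d : ℕ) : Type := EuclideanSpace ℝ (Fin d)

/-- Euclidean (ℓ2) norm of the concatenation of two vectors. -/
noncomputable def pnorm {E F : Type*} [NormedAddCommGroup E] [NormedAddCommGroup F]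
    (u : E) (v : F) : ℝ :=
  Real.sqrt (‖u‖ ^ 2 + ‖v‖ ^ 2)

/-- Partial gradient in the first variable. -/
noncomputable def gradX {dx dy : ℕ} (g : Vec dx → Vec dy → ℝ) (x : Vec dx) (y : Vec dy) : Vec dx :=
  gradient (fun x' => g x' y) x

/-- Partial gradient in the second variable. -/
noncomputable def gradY {dx dy : ℕ} (g : Vec dx → Vec dy → ℝ) (x : Vec dx) (y : Vec dy) : Vec dy :=
  gradient (fun y' => g x y') y

variable {dx dy m n : ℕ} {Z : Fin m → Type*}

/-- Distributed neighboring datasets: each local dataset differs in at most one sample. -/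
def Neighboring (S S' : ∀ i, Fin n → Z i) : Prop :=
  ∀ i, ∃ l₀ : Fin n, ∀ l, l ≠ l₀ → S i l = S' i l

/-- `G`-Lipschitz continuity of every local loss, jointly in `(x, y)`. -/
def GLip (G : ℝ) (f : ∀ i, Vec dx → Vec dy → Z i → ℝ) : Prop :=
  ∀ i (ξ : Z i) x y x' y', |f i x y ξ - f i x' y' ξ| ≤ G * pnorm (x - x') (y - y')

/-- `L`-smoothness of every local loss: differentiability plus `L`-Lipschitz gradients. -/
def LSmooth (L : ℝ) (f : ∀ i, Vec dx → Vec dy → Z i → ℝ) : Prop :=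
  (∀ i (ξ : Z i), Differentiable ℝ (fun p : Vec dx × Vec dy => f i p.1 p.2 ξ)) ∧
  ∀ i (ξ : Z i) x y x' y',
    pnorm (gradX (fun a b => f i a b ξ) x y - gradX (fun a b => f i a b ξ) x' y')
          (gradY (fun a b => f i a b ξ) x y - gradY (fun a b => f i a b ξ) x' y')
      ≤ L * pnorm (x - x') (y - y')

/-- `μ`-strong convexity in `x` and `μ`-strong concavity in `y` of every local loss. -/
def SCSC (μ : ℝ) (f : ∀ i, Vec dx → Vec dy → Z i → ℝ) : Prop :=
  (∀ i (ξ : Z i) y x x',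
      f i x y ξ + ⟪gradX (fun a b => f i a b ξ) x y, x' - x⟫ + μ / 2 * ‖x' - x‖ ^ 2
        ≤ f i x' y ξ) ∧
  (∀ i (ξ : Z i) x y y',
      f i x y' ξ ≤ f i x y ξ + ⟪gradY (fun a b => f i a b ξ) x y, y' - y⟫
        - μ / 2 * ‖y' - y‖ ^ 2)

/-- One local SGDA step with stepsize `η` and sample indices `jj`. -/
noncomputable def sgdaStep (f : ∀ i, Vec dx → Vec dy → Z i → ℝ) (S : ∀ i, Fin n → Z i)
    (η : ℝ) (jj : Fin m → Fin n) (st : Fin m → Vec dx × Vec dy) : Fin m → Vec dx × Vec dy :=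
  fun i =>
    ((st i).1 - η • gradX (fun a b => f i a b (S i (jj i))) (st i).1 (st i).2,
     (st i).2 + η • gradY (fun a b => f i a b (S i (jj i))) (st i).1 (st i).2)

/-- `k` local SGDA steps within communication round `t`. -/
noncomputable def sgdaLocal (f : ∀ i, Vec dx → Vec dy → Z i → ℝ) (S : ∀ i, Fin n → Z i)
    (η : ℕ → ℕ → ℝ) (j : ℕ → ℕ → Fin m → Fin n) (t : ℕ) :
    ℕ → (Fin m → Vec dx × Vec dy) → (Fin m → Vec dx × Vec dy)
  | 0, st => st
  | k + 1, st => sgdaStep f S (η t k) (j t k) (sgdaLocal f S η j t k st)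

/-- Communication through the mixing matrix `W`. -/
noncomputable def sgdaComm (W : Matrix (Fin m) (Fin m) ℝ) (st : Fin m → Vec dx × Vec dy) :
    Fin m → Vec dx × Vec dy :=
  fun i => (∑ h, W i h • (st h).1, ∑ h, W i h • (st h).2)

/-- The state `(x^t_i, y^t_i)_i` after `t` communication rounds of Distributed-SGDA. -/
noncomputable def sgdaRound (f : ∀ i, Vec dx → Vec dy → Z i → ℝ) (S : ∀ i, Fin n → Z i)
    (W : Matrix (Fin m) (Fin m) ℝ) (η : ℕ → ℕ → ℝ) (K : ℕ) (j : ℕ → ℕ → Fin m → Fin n) :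
    ℕ → (Fin m → Vec dx × Vec dy)
  | 0 => fun _ => (0, 0)
  | t + 1 => sgdaComm W (sgdaLocal f S η j (t + 1) K (sgdaRound f S W η K j t))

/-- The local iterates `(x^t_{i,k}, y^t_{i,k})_i` (for rounds `t ≥ 1`). -/
noncomputable def sgdaIter (f : ∀ i, Vec dx → Vec dy → Z i → ℝ) (S : ∀ i, Fin n → Z i)
    (W : Matrix (Fin m) (Fin m) ℝ) (η : ℕ → ℕ → ℝ) (K : ℕ) (j : ℕ → ℕ → Fin m → Fin n)
    (t k : ℕ) : Fin m → Vec dx × Vec dy :=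
  sgdaLocal f S η j t k (sgdaRound f S W η K j (t - 1))

/-- Output `A_x(S) = (1/m) ∑ᵢ x^T_i`. -/
noncomputable def sgdaOutX (f : ∀ i, Vec dx → Vec dy → Z i → ℝ) (S : ∀ i, Fin n → Z i)
    (W : Matrix (Fin m) (Fin m) ℝ) (η : ℕ → ℕ → ℝ) (K : ℕ) (j : ℕ → ℕ → Fin m → Fin n)
    (T : ℕ) : Vec dx :=
  (m : ℝ)⁻¹ • ∑ i, (sgdaRound f S W η K j T i).1

/-- Output `A_y(S) = (1/m) ∑ᵢ y^T_i`. -/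
noncomputable def sgdaOutY (f : ∀ i, Vec dx → Vec dy → Z i → ℝ) (S : ∀ i, Fin n → Z i)
    (W : Matrix (Fin m) (Fin m) ℝ) (η : ℕ → ℕ → ℝ) (K : ℕ) (j : ℕ → ℕ → Fin m → Fin n)
    (T : ℕ) : Vec dy :=
  (m : ℝ)⁻¹ • ∑ i, (sgdaRound f S W η K j T i).2

/-- Average of the `x`-components of a state. -/
noncomputable def xbar (st : Fin m → Vec dx × Vec dy) : Vec dx := (m : ℝ)⁻¹ • ∑ i, (st i).1

/-- Average of the `y`-components of a state. -/
noncomputable def ybar (st : Fin m → Vec dx × Vec dy) : Vec dy := (m : ℝ)⁻¹ • ∑ i, (st i).2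

/-- Consensus error of a state. -/
noncomputable def consensus (st : Fin m → Vec dx × Vec dy) : ℝ :=
  (m : ℝ)⁻¹ * ∑ i, pnorm ((st i).1 - xbar st) ((st i).2 - ybar st)

/-- Consensus term `Δ^t_k`. -/
noncomputable def sgdaCons (f : ∀ i, Vec dx → Vec dy → Z i → ℝ) (S : ∀ i, Fin n → Z i)
    (W : Matrix (Fin m) (Fin m) ℝ) (η : ℕ → ℕ → ℝ) (K : ℕ) (j : ℕ → ℕ → Fin m → Fin n)
    (t k : ℕ) : ℝ :=
  consensus (sgdaIter f S W η K j t k)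

/-- The sample indices `j^t_k(i)` are independent and uniformly distributed on `Fin n`. -/
def UnifIID {Ω : Type*} [MeasurableSpace Ω] {m n : ℕ}
    (j : Ω → ℕ → ℕ → Fin m → Fin n) (P : Measure Ω) : Prop :=
  (∀ t k i, Measurable fun ω => j ω t k i) ∧
  (∀ t k i (a : Fin n), P {ω | j ω t k i = a} = (n : ℝ≥0∞)⁻¹) ∧
  ProbabilityTheory.iIndepFun
    (fun (p : ℕ × ℕ × Fin m) ω => j ω p.1 p.2.1 p.2.2) P

/-- Spectral norm (ℓ2 operator norm) of a real matrix. -/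
noncomputable def specNorm {a b : ℕ} (A : Matrix (Fin a) (Fin b) ℝ) : ℝ :=
  ‖LinearMap.toContinuousLinearMap (Matrix.toEuclideanLin A)‖

/-- The matrix `P_m` with all entries `1/m`. -/
noncomputable def Pmat (m : ℕ) : Matrix (Fin m) (Fin m) ℝ :=
  Matrix.of fun _ _ => (m : ℝ)⁻¹


/-- Empirical objective `F_S`. -/
noncomputable def empF (f : ∀ i, Vec dx → Vec dy → Z i → ℝ) (S : ∀ i, Fin n → Z i)
    (x : Vec dx) (y : Vec dy) : ℝ :=
  (m : ℝ)⁻¹ * ∑ i, ((n : ℝ)⁻¹ * ∑ l, f i x y (S i l))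

/-- Averaged iterate `x̃^T_K = (1/(TK)) ∑_{t=1}^T ∑_{k=0}^{K-1} x̄^t_k`. -/
noncomputable def sgdaAvgX (f : ∀ i, Vec dx → Vec dy → Z i → ℝ) (S : ∀ i, Fin n → Z i)
    (W : Matrix (Fin m) (Fin m) ℝ) (η : ℕ → ℕ → ℝ) (K : ℕ) (j : ℕ → ℕ → Fin m → Fin n)
    (T : ℕ) : Vec dx :=
  ((T : ℝ) * K)⁻¹ • ∑ t ∈ Icc 1 T, ∑ k ∈ range K, xbar (sgdaIter f S W η K j t k)

/-- Averaged iterate `ỹ^T_K`. -/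
noncomputable def sgdaAvgY (f : ∀ i, Vec dx → Vec dy → Z i → ℝ) (S : ∀ i, Fin n → Z i)
    (W : Matrix (Fin m) (Fin m) ℝ) (η : ℕ → ℕ → ℝ) (K : ℕ) (j : ℕ → ℕ → Fin m → Fin n)
    (T : ℕ) : Vec dy :=
  ((T : ℝ) * K)⁻¹ • ∑ t ∈ Icc 1 T, ∑ k ∈ range K, ybar (sgdaIter f S W η K j t k)

section Helpers

variable {E : Type*} [NormedAddCommGroup E] [InnerProductSpace ℝ E]

lemma nsum_add_le {m : ℕ} (v w : Fin m → E) :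
    Real.sqrt (∑ i, ‖v i + w i‖ ^ 2) ≤
      Real.sqrt (∑ i, ‖v i‖ ^ 2) + Real.sqrt (∑ i, ‖w i‖ ^ 2) := by
  set A := Real.sqrt (∑ i, ‖v i‖ ^ 2)
  set B := Real.sqrt (∑ i, ‖w i‖ ^ 2)
  have hA : 0 ≤ A := Real.sqrt_nonneg _
  have hB : 0 ≤ B := Real.sqrt_nonneg _
  have hA2 : A ^ 2 = ∑ i, ‖v i‖ ^ 2 := Real.sq_sqrt (by positivity)
  have hB2 : B ^ 2 = ∑ i, ‖w i‖ ^ 2 := Real.sq_sqrt (by positivity)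
  have hcs : ∑ i, ⟪v i, w i⟫ ≤ A * B := by
    calc ∑ i, ⟪v i, w i⟫ ≤ ∑ i, ‖v i‖ * ‖w i‖ :=
          Finset.sum_le_sum fun i _ => real_inner_le_norm _ _
      _ ≤ A * B := Real.sum_mul_le_sqrt_mul_sqrt _ _ _
  have hexp : ∑ i, ‖v i + w i‖ ^ 2 ≤ (A + B) ^ 2 := by
    have : ∀ i : Fin m, ‖v i + w i‖ ^ 2 = ‖v i‖ ^ 2 + 2 * ⟪v i, w i⟫ + ‖w i‖ ^ 2 :=
      fun i => norm_add_sq_real _ _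
    rw [Finset.sum_congr rfl fun i _ => this i]
    rw [Finset.sum_add_distrib, Finset.sum_add_distrib, ← Finset.mul_sum]
    nlinarith
  calc Real.sqrt (∑ i, ‖v i + w i‖ ^ 2) ≤ Real.sqrt ((A + B) ^ 2) := Real.sqrt_le_sqrt hexp
    _ = A + B := Real.sqrt_sq (by positivity)

lemma mean_min {m : ℕ} (u : Fin m → E) (c : E) :
    ∑ i, ‖u i - (m : ℝ)⁻¹ • ∑ h, u h‖ ^ 2 ≤ ∑ i, ‖u i - c‖ ^ 2 := by
  rcases Nat.eq_zero_or_pos m with hm | hm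
  · subst hm; simp
  set μ := (m : ℝ)⁻¹ • ∑ h, u h with hμ
  have hsum : ∑ i, (u i - μ) = 0 := by
    rw [Finset.sum_sub_distrib]
    simp only [Finset.sum_const, card_univ, Fintype.card_fin, hμ, ← Nat.cast_smul_eq_nsmul ℝ, smul_smul]
    rw [mul_inv_cancel₀ (by exact_mod_cast hm.ne'), one_smul, sub_self]
  have hterm : ∀ i : Fin m, ‖u i - c‖ ^ 2
      = ‖u i - μ‖ ^ 2 + 2 * ⟪u i - μ, μ - c⟫ + ‖μ - c‖ ^ 2 := by
    intro i
    rw [show u i - c = (u i - μ) + (μ - c) by abel, norm_add_sq_real]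
  calc ∑ i, ‖u i - μ‖ ^ 2 ≤ ∑ i, ‖u i - μ‖ ^ 2 + (2 * ⟪∑ i, (u i - μ), μ - c⟫ + (m : ℝ) * ‖μ - c‖ ^ 2) := by
        rw [hsum]; simp; positivity
    _ = ∑ i, ‖u i - c‖ ^ 2 := by
        rw [Finset.sum_congr rfl fun i _ => hterm i, Finset.sum_add_distrib,
          Finset.sum_add_distrib, sum_inner, ← Finset.mul_sum]
        simp [card_univ, mul_comm]
        ring

lemma spec_scalar {m : ℕ} (A : Matrix (Fin m) (Fin m) ℝ) (w : Fin m → ℝ) :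
    ∑ i, (∑ h, A i h * w h) ^ 2 ≤ specNorm A ^ 2 * ∑ h, w h ^ 2 := by
  set L := LinearMap.toContinuousLinearMap (Matrix.toEuclideanLin A)
  set u : EuclideanSpace ℝ (Fin m) := (WithLp.equiv 2 _).symm w
  have h1 : ‖L u‖ ≤ specNorm A * ‖u‖ := L.le_opNorm u
  have h2 : ‖L u‖ ^ 2 ≤ specNorm A ^ 2 * ‖u‖ ^ 2 := by
    have := mul_self_le_mul_self (norm_nonneg (L u)) h1
    nlinarith [norm_nonneg u, norm_nonneg (L u)]
  have hLu : ∀ i, L u i = ∑ h, A i h * w h := by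
    intro i
    show Matrix.toEuclideanLin A u i = _
    rw [Matrix.toEuclideanLin_apply]
    simp [Matrix.mulVec, dotProduct, u]
  have hnu : ‖u‖ ^ 2 = ∑ h, w h ^ 2 := by
    rw [EuclideanSpace.norm_eq, Real.sq_sqrt (by positivity)]
    simp [u, sq_abs]
  have hnLu : ‖L u‖ ^ 2 = ∑ i, (∑ h, A i h * w h) ^ 2 := by
    rw [EuclideanSpace.norm_eq, Real.sq_sqrt (by positivity)]
    exact Finset.sum_congr rfl fun i _ => by rw [hLu, Real.norm_eq_abs, sq_abs]
  rw [← hnLu, ← hnu]; exact h2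

lemma euclid_sum_apply {m D : ℕ} (r : Fin m → EuclideanSpace ℝ (Fin D)) (a : Fin m → ℝ)
    (c : Fin D) : (∑ x : Fin m, a x • r x) c = ∑ x : Fin m, a x * r x c := by
  induction (Finset.univ : Finset (Fin m)) using Finset.induction with
  | empty => simp
  | insert _ _ h ih => rw [Finset.sum_insert h, Finset.sum_insert h, ← ih]; rfl

lemma spec_contract {m : ℕ} [FiniteDimensional ℝ E] (A : Matrix (Fin m) (Fin m) ℝ)
    (v : Fin m → E) :
    ∑ i, ‖∑ h, A i h • v h‖ ^ 2 ≤ specNorm A ^ 2 * ∑ h, ‖v h‖ ^ 2 := by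
  set b := stdOrthonormalBasis ℝ E
  have hnorm : ∀ x : E, ‖x‖ ^ 2 = ∑ c, (b.repr x c) ^ 2 := by
    intro x
    rw [← b.repr.norm_map x, EuclideanSpace.norm_eq, Real.sq_sqrt (by positivity)]
    exact Finset.sum_congr rfl fun c _ => sq_abs _
  calc ∑ i, ‖∑ h, A i h • v h‖ ^ 2
      = ∑ i, ∑ c, (∑ h, A i h * b.repr (v h) c) ^ 2 := by
        refine Finset.sum_congr rfl fun i _ => ?_
        rw [hnorm]
        refine Finset.sum_congr rfl fun c _ => ?_
        congr 1
        rw [_root_.map_sum]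
        simp only [_root_.map_smul]
        exact euclid_sum_apply (fun h => b.repr (v h)) (fun h => A i h) c
    _ = ∑ c, ∑ i, (∑ h, A i h * b.repr (v h) c) ^ 2 := Finset.sum_comm
    _ ≤ ∑ c, specNorm A ^ 2 * ∑ h, (b.repr (v h) c) ^ 2 :=
        Finset.sum_le_sum fun c _ => spec_scalar A _
    _ = specNorm A ^ 2 * ∑ h, ‖v h‖ ^ 2 := by
        rw [← Finset.mul_sum, Finset.sum_comm]
        congr 1
        exact Finset.sum_congr rfl fun h _ => (hnorm (v h)).symm


lemma pnorm_smul {E F : Type*} [NormedAddCommGroup E] [NormedAddCommGroup F]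
    [Module ℝ E] [Module ℝ F] [NormSMulClass ℝ E] [NormSMulClass ℝ F] (t : ℝ) (u : E) (v : F) :
    pnorm (t • u) (t • v) = |t| * pnorm u v := by
  unfold pnorm
  rw [norm_smul, norm_smul]
  rw [show (‖t‖ * ‖u‖) ^ 2 + (‖t‖ * ‖v‖) ^ 2 = t ^ 2 * (‖u‖ ^ 2 + ‖v‖ ^ 2) by
    rw [Real.norm_eq_abs]; ring_nf; rw [sq_abs]; ring]
  rw [Real.sqrt_mul (sq_nonneg t), Real.sqrt_sq_eq_abs]

lemma grad_bound {G : ℝ} (hG : 0 ≤ G) (g : Vec dx → Vec dy → ℝ)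
    (hd : Differentiable ℝ (fun p : Vec dx × Vec dy => g p.1 p.2))
    (hl : ∀ x y x' y', |g x y - g x' y'| ≤ G * pnorm (x - x') (y - y'))
    (x : Vec dx) (y : Vec dy) :
    ‖gradX g x y‖ ^ 2 + ‖gradY g x y‖ ^ 2 ≤ G ^ 2 := by
  set F : Vec dx × Vec dy → ℝ := fun p => g p.1 p.2 with hF
  have hFx : HasFDerivAt F (fderiv ℝ F (x, y)) (x, y) := (hd (x, y)).hasFDerivAt
  set D := fderiv ℝ F (x, y) with hD
  -- partial fderivs
  have h1 : HasFDerivAt (fun x' => g x' y) (D.comp (ContinuousLinearMap.inl ℝ _ _)) x := by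
    exact hFx.comp (f := fun e : Vec dx => (e, y)) x (hasFDerivAt_prodMk_left x y)
  have h2 : HasFDerivAt (fun y' => g x y') (D.comp (ContinuousLinearMap.inr ℝ _ _)) y := by
    exact hFx.comp (f := fun e : Vec dy => (x, e)) y (hasFDerivAt_prodMk_right x y)
  have hgx : ∀ u : Vec dx, ⟪gradX g x y, u⟫ = D (u, 0) := by
    intro u
    rw [gradX, gradient, h1.fderiv, InnerProductSpace.toDual_symm_apply]
    rfl
  have hgy : ∀ v : Vec dy, ⟪gradY g x y, v⟫ = D (0, v) := by
    intro v
    rw [gradY, gradient, h2.fderiv, InnerProductSpace.toDual_symm_apply]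
    rfl
  set u := gradX g x y
  set v := gradY g x y
  have hDuv : D (u, v) = ‖u‖ ^ 2 + ‖v‖ ^ 2 := by
    have : ((u, v) : Vec dx × Vec dy) = (u, 0) + (0, v) := by simp
    rw [this, _root_.map_add, ← hgx u, ← hgy v, real_inner_self_eq_norm_sq, real_inner_self_eq_norm_sq]
  -- the path
  have hpu : HasDerivAt (fun t : ℝ => x + t • u) u 0 := by
    simpa using ((hasDerivAt_id (0 : ℝ)).smul_const u).const_add x
  have hpv : HasDerivAt (fun t : ℝ => y + t • v) v 0 := by
    simpa using ((hasDerivAt_id (0 : ℝ)).smul_const v).const_add y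
  have hpath : HasDerivAt (fun t : ℝ => ((x + t • u, y + t • v) : Vec dx × Vec dy)) (u, v) 0 :=
    hpu.prodMk hpv
  have hFx0 : HasFDerivAt F D (x + (0 : ℝ) • u, y + (0 : ℝ) • v) := by
    simpa using hFx
  have hh : HasDerivAt (fun t : ℝ => F (x + t • u, y + t • v)) (D (u, v)) 0 :=
    hFx0.comp_hasDerivAt (f := fun t : ℝ => ((x + t • u, y + t • v) : Vec dx × Vec dy)) 0 hpath
  -- lipschitz bound on slope
  set C := G * pnorm u v with hC
  have hslope : ∀ t : ℝ, t ≠ 0 → |slope (fun t : ℝ => F (x + t • u, y + t • v)) 0 t| ≤ C := by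
    intro t ht
    rw [slope_def_field]
    rw [abs_div]
    rw [div_le_iff₀ (by simpa using abs_pos.mpr ht)]
    have : F (x + t • u, y + t • v) - F (x + (0:ℝ) • u, y + (0:ℝ) • v)
        = g (x + t • u) (y + t • v) - g (x + (0:ℝ) • u) (y + (0:ℝ) • v) := rfl
    calc |F (x + t • u, y + t • v) - F (x + (0:ℝ) • u, y + (0:ℝ) • v)|
        ≤ G * pnorm ((x + t • u) - (x + (0:ℝ) • u)) ((y + t • v) - (y + (0:ℝ) • v)) := by
          rw [this]; exact hl _ _ _ _
      _ = C * |t - 0| := by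
          rw [show (x + t • u) - (x + (0:ℝ) • u) = (t - 0) • u by module,
            show (y + t • v) - (y + (0:ℝ) • v) = (t - 0) • v by module,
            pnorm_smul, hC]; ring
  have hD2 : |D (u, v)| ≤ C := by
    have htend := hasDerivAt_iff_tendsto_slope.mp hh
    have habs : Filter.Tendsto (fun t => |slope (fun t : ℝ => F (x + t • u, y + t • v)) 0 t|)
        (nhdsWithin 0 {(0:ℝ)}ᶜ) (nhds |D (u, v)|) := htend.abs
    refine le_of_tendsto habs ?_
    filter_upwards [self_mem_nhdsWithin] with t ht
    exact hslope t ht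
  have hpn : pnorm u v = Real.sqrt (‖u‖ ^ 2 + ‖v‖ ^ 2) := rfl
  have hs : Real.sqrt (‖u‖ ^ 2 + ‖v‖ ^ 2) ^ 2 = ‖u‖ ^ 2 + ‖v‖ ^ 2 :=
    Real.sq_sqrt (by positivity)
  have h0 : ‖u‖ ^ 2 + ‖v‖ ^ 2 ≤ C := by
    rw [← hDuv]
    calc D (u, v) ≤ |D (u, v)| := le_abs_self _
      _ ≤ C := hD2
  rw [hC, hpn] at h0
  nlinarith [Real.sqrt_nonneg (‖u‖ ^ 2 + ‖v‖ ^ 2), hs, sq_nonneg (Real.sqrt (‖u‖ ^ 2 + ‖v‖ ^ 2) - G)]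


/-- The product space with the ℓ2 norm. -/
abbrev EE (dx dy : ℕ) : Type := WithLp 2 (Vec dx × Vec dy)

/-- Linear equivalence between the plain product and the ℓ2 product. -/
noncomputable def L2e (dx dy : ℕ) : EE dx dy ≃ₗ[ℝ] Vec dx × Vec dy :=
  WithLp.linearEquiv 2 ℝ (Vec dx × Vec dy)

lemma norm_L2e_symm (p : Vec dx × Vec dy) : ‖(L2e dx dy).symm p‖ = pnorm p.1 p.2 := by
  have h := WithLp.prod_norm_sq_eq_of_L2 ((L2e dx dy).symm p)
  have h1 : ((L2e dx dy).symm p).fst = p.1 := rfl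
  have h2 : ((L2e dx dy).symm p).snd = p.2 := rfl
  rw [pnorm, ← h1, ← h2, ← h, Real.sqrt_sq (norm_nonneg _)]

lemma norm_L2e_symm_sq (p : Vec dx × Vec dy) :
    ‖(L2e dx dy).symm p‖ ^ 2 = ‖p.1‖ ^ 2 + ‖p.2‖ ^ 2 := by
  rw [norm_L2e_symm, pnorm, Real.sq_sqrt (by positivity)]

lemma specNorm_nonneg {a b : ℕ} (A : Matrix (Fin a) (Fin b) ℝ) : 0 ≤ specNorm A :=
  norm_nonneg _

/-- ℓ2 consensus quantity. -/
noncomputable def devQ (st : Fin m → Vec dx × Vec dy) : ℝ :=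
  Real.sqrt (∑ i, ‖(L2e dx dy).symm (st i) - (m : ℝ)⁻¹ • ∑ h, (L2e dx dy).symm (st h)‖ ^ 2)

lemma devQ_nonneg (st : Fin m → Vec dx × Vec dy) : 0 ≤ devQ st := Real.sqrt_nonneg _

lemma mean_L2e_symm (st : Fin m → Vec dx × Vec dy) :
    (m : ℝ)⁻¹ • ∑ h, (L2e dx dy).symm (st h) = (L2e dx dy).symm (xbar st, ybar st) := by
  rw [← _root_.map_sum, ← _root_.map_smul]
  congr 1
  refine Prod.ext ?_ ?_
  · rw [Prod.smul_fst, Prod.fst_sum]; rfl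
  · rw [Prod.smul_snd, Prod.snd_sum]; rfl

lemma consensus_le_devQ (st : Fin m → Vec dx × Vec dy) :
    consensus st ≤ (m : ℝ)⁻¹ * Real.sqrt m * devQ st := by
  have hterm : ∀ i : Fin m, pnorm ((st i).1 - xbar st) ((st i).2 - ybar st)
      = ‖(L2e dx dy).symm (st i) - (m : ℝ)⁻¹ • ∑ h, (L2e dx dy).symm (st h)‖ := by
    intro i
    rw [mean_L2e_symm, ← _root_.map_sub, norm_L2e_symm, Prod.fst_sub, Prod.snd_sub]
  rw [consensus, devQ, mul_assoc]
  refine mul_le_mul_of_nonneg_left ?_ (by positivity)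
  rw [Finset.sum_congr rfl fun i _ => hterm i]
  set a : Fin m → ℝ := fun i =>
    ‖(L2e dx dy).symm (st i) - (m : ℝ)⁻¹ • ∑ h, (L2e dx dy).symm (st h)‖ with ha
  have h0 : 0 ≤ ∑ i, a i := Finset.sum_nonneg fun i _ => norm_nonneg _
  have hcs : (∑ i, a i) ^ 2 ≤ (m : ℝ) * ∑ i, a i ^ 2 := by
    have := sq_sum_le_card_mul_sum_sq (s := (univ : Finset (Fin m))) (f := a)
    simpa [card_univ] using this
  calc ∑ i, a i = Real.sqrt ((∑ i, a i) ^ 2) := (Real.sqrt_sq h0).symm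
    _ ≤ Real.sqrt ((m : ℝ) * ∑ i, a i ^ 2) := Real.sqrt_le_sqrt hcs
    _ = Real.sqrt m * Real.sqrt (∑ i, a i ^ 2) := Real.sqrt_mul (by positivity) _

section Abstract
variable {E : Type*} [NormedAddCommGroup E] [InnerProductSpace ℝ E]

lemma step_abstract {m : ℕ} (u g : Fin m → E) {η c : ℝ} (hη : 0 ≤ η) (hc : 0 ≤ c)
    (hg : ∀ i, ‖g i‖ ^ 2 ≤ c ^ 2) :
    Real.sqrt (∑ i, ‖(u i + η • g i) - (m : ℝ)⁻¹ • ∑ h, (u h + η • g h)‖ ^ 2)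
      ≤ Real.sqrt (∑ i, ‖u i - (m : ℝ)⁻¹ • ∑ h, u h‖ ^ 2) + η * c * Real.sqrt m := by
  set μ := (m : ℝ)⁻¹ • ∑ h, u h with hμ
  set gb := (m : ℝ)⁻¹ • ∑ h, g h with hgb
  have h1 : ∑ i, ‖(u i + η • g i) - (m : ℝ)⁻¹ • ∑ h, (u h + η • g h)‖ ^ 2
      ≤ ∑ i, ‖(u i - μ) + η • (g i - gb)‖ ^ 2 := by
    refine (mean_min (fun i => u i + η • g i) (μ + η • gb)).trans
      (le_of_eq (Finset.sum_congr rfl fun i _ => ?_))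
    congr 1
    rw [smul_sub]
    abel
  have e2 : Real.sqrt (∑ i, ‖η • (g i - gb)‖ ^ 2) ≤ η * c * Real.sqrt m := by
    have hpt : ∀ i : Fin m, ‖η • (g i - gb)‖ ^ 2 = η ^ 2 * ‖g i - gb‖ ^ 2 := by
      intro i
      rw [norm_smul, Real.norm_eq_abs, mul_pow, sq_abs]
    rw [Finset.sum_congr rfl fun i _ => hpt i, ← Finset.mul_sum,
      Real.sqrt_mul (by positivity), Real.sqrt_sq_eq_abs, abs_of_nonneg hη]
    have hgle : ∑ i, ‖g i - gb‖ ^ 2 ≤ (m : ℝ) * c ^ 2 := by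
      have hmin := mean_min g (0 : E)
      simp only [sub_zero] at hmin
      rw [← hgb] at hmin
      refine hmin.trans ?_
      calc ∑ i, ‖g i‖ ^ 2 ≤ ∑ _i : Fin m, c ^ 2 := Finset.sum_le_sum fun i _ => hg i
        _ = (m : ℝ) * c ^ 2 := by simp [mul_comm]
    calc η * Real.sqrt (∑ i, ‖g i - gb‖ ^ 2) ≤ η * Real.sqrt ((m : ℝ) * c ^ 2) :=
          mul_le_mul_of_nonneg_left (Real.sqrt_le_sqrt hgle) hη
      _ = η * c * Real.sqrt m := by
          rw [Real.sqrt_mul (by positivity), Real.sqrt_sq hc]; ring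
  calc Real.sqrt (∑ i, ‖(u i + η • g i) - (m : ℝ)⁻¹ • ∑ h, (u h + η • g h)‖ ^ 2)
      ≤ Real.sqrt (∑ i, ‖(u i - μ) + η • (g i - gb)‖ ^ 2) := Real.sqrt_le_sqrt h1
    _ ≤ Real.sqrt (∑ i, ‖u i - μ‖ ^ 2) + Real.sqrt (∑ i, ‖η • (g i - gb)‖ ^ 2) :=
        nsum_add_le _ _
    _ ≤ Real.sqrt (∑ i, ‖u i - μ‖ ^ 2) + η * c * Real.sqrt m := add_le_add_right e2 _

lemma comm_abstract {m : ℕ} [FiniteDimensional ℝ E] (hm : 0 < m)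
    (W : Matrix (Fin m) (Fin m) ℝ) (hWrow : ∀ i, ∑ h, W i h = 1) (u : Fin m → E) :
    Real.sqrt (∑ i, ‖(∑ h, W i h • u h) - (m : ℝ)⁻¹ • ∑ h', ∑ h, W h' h • u h‖ ^ 2)
      ≤ specNorm (W - Pmat m) *
        Real.sqrt (∑ i, ‖u i - (m : ℝ)⁻¹ • ∑ h, u h‖ ^ 2) := by
  set μ := (m : ℝ)⁻¹ • ∑ h, u h with hμ
  have hm' : ((m : ℝ)) ≠ 0 := by exact_mod_cast hm.ne'
  have key : ∀ i, (∑ h, W i h • u h) - μ = ∑ h, (W - Pmat m) i h • (u h - μ) := by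
    intro i
    have : ∑ h, (W - Pmat m) i h • (u h - μ)
        = (∑ h, W i h • u h) - (∑ h, W i h) • μ
          - ((m : ℝ)⁻¹ • ∑ h, u h) + ((m : ℝ) * (m : ℝ)⁻¹) • μ := by
      simp only [Matrix.sub_apply, Pmat, Matrix.of_apply, sub_smul, smul_sub]
      rw [Finset.sum_sub_distrib, Finset.sum_sub_distrib, Finset.sum_sub_distrib,
        ← Finset.sum_smul, ← Finset.smul_sum]
      have h3 : ∑ _h : Fin m, (m : ℝ)⁻¹ • μ = ((m : ℝ) * (m : ℝ)⁻¹) • μ := by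
        rw [Finset.sum_const, card_univ, Fintype.card_fin, ← Nat.cast_smul_eq_nsmul ℝ,
          smul_smul]
      rw [h3]
      abel
    rw [this, hWrow, one_smul, mul_inv_cancel₀ hm', one_smul, ← hμ]
    abel
  calc Real.sqrt (∑ i, ‖(∑ h, W i h • u h) - (m : ℝ)⁻¹ • ∑ h', ∑ h, W h' h • u h‖ ^ 2)
      ≤ Real.sqrt (∑ i, ‖(∑ h, W i h • u h) - μ‖ ^ 2) :=
        Real.sqrt_le_sqrt (mean_min (fun i => ∑ h, W i h • u h) μ)
    _ = Real.sqrt (∑ i, ‖∑ h, (W - Pmat m) i h • (u h - μ)‖ ^ 2) := by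
        rw [Finset.sum_congr rfl fun i _ => by rw [key i]]
    _ ≤ Real.sqrt (specNorm (W - Pmat m) ^ 2 * ∑ h, ‖u h - μ‖ ^ 2) :=
        Real.sqrt_le_sqrt (spec_contract _ _)
    _ = specNorm (W - Pmat m) * Real.sqrt (∑ h, ‖u h - μ‖ ^ 2) := by
        rw [Real.sqrt_mul (by positivity), Real.sqrt_sq (specNorm_nonneg _)]

end Abstract

lemma devQ_step (f : ∀ i, Vec dx → Vec dy → Z i → ℝ) (S : ∀ i, Fin n → Z i)
    {G η : ℝ} (hη : 0 ≤ η) (hG : 0 ≤ G) (jj : Fin m → Fin n) (st : Fin m → Vec dx × Vec dy)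
    (hgrad : ∀ i, ‖gradX (fun a b => f i a b (S i (jj i))) (st i).1 (st i).2‖ ^ 2
      + ‖gradY (fun a b => f i a b (S i (jj i))) (st i).1 (st i).2‖ ^ 2 ≤ G ^ 2) :
    devQ (sgdaStep f S η jj st) ≤ devQ st + η * G * Real.sqrt m := by
  have hstep : ∀ i, (L2e dx dy).symm (sgdaStep f S η jj st i)
      = (L2e dx dy).symm (st i) + η • (L2e dx dy).symm
        (-gradX (fun a b => f i a b (S i (jj i))) (st i).1 (st i).2,
          gradY (fun a b => f i a b (S i (jj i))) (st i).1 (st i).2) := by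
    intro i
    rw [← _root_.map_smul, ← _root_.map_add]
    congr 1
    refine Prod.ext ?_ ?_
    · show (st i).1 - η • _ = (st i).1 + η • -gradX _ _ _
      rw [smul_neg, ← sub_eq_add_neg]
    · rfl
  rw [devQ]
  simp only [hstep]
  refine step_abstract _ _ hη hG fun i => ?_
  rw [norm_L2e_symm_sq]
  simpa [norm_neg] using hgrad i

lemma devQ_comm (hm : 0 < m) (W : Matrix (Fin m) (Fin m) ℝ) (hWrow : ∀ i, ∑ h, W i h = 1)
    (st : Fin m → Vec dx × Vec dy) :
    devQ (sgdaComm W st) ≤ specNorm (W - Pmat m) * devQ st := by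
  have hcomm : ∀ i, (L2e dx dy).symm (sgdaComm W st i)
      = ∑ h, W i h • (L2e dx dy).symm (st h) := by
    intro i
    have h1 : sgdaComm W st i = ∑ h, W i h • st h := by
      refine Prod.ext ?_ ?_
      · rw [Prod.fst_sum]
        simp [sgdaComm]
      · rw [Prod.snd_sum]
        simp [sgdaComm]
    rw [h1, _root_.map_sum]
    exact Finset.sum_congr rfl fun h _ => _root_.map_smul _ _ _
  rw [devQ]
  simp only [hcomm]
  exact comm_abstract hm W hWrow _

lemma devQ_zero_state : devQ (fun _ : Fin m => ((0, 0) : Vec dx × Vec dy)) = 0 := by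
  rw [devQ]
  simp [Prod.mk_zero_zero]


theorem alg_final (L k K : ℝ) (hL0 : 0 ≤ L) (hL1 : L < 1) (hk0 : 0 ≤ k) (hkK : k ≤ K) :
    k + K * L / (1 - L) ≤ Real.sqrt (1 / (1 - L) * (k ^ 2 + 2 * L / (1 - L ^ 2) * K ^ 2)) := by
  have hu : (0:ℝ) < 1 - L := by linarith
  have h1L : (0:ℝ) < 1 + L := by linarith
  have hu2 : (0:ℝ) < 1 - L ^ 2 := by nlinarith
  have hK0 : (0:ℝ) ≤ K := le_trans hk0 hkK
  have e1 : k + K * L / (1 - L) = (k * (1 - L) + K * L) / (1 - L) := by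
    rw [eq_div_iff hu.ne', add_mul, div_mul_cancel₀ _ hu.ne']
  have e2 : 1 / (1 - L) * (k ^ 2 + 2 * L / (1 - L ^ 2) * K ^ 2)
      = (k ^ 2 * (1 - L ^ 2) + 2 * L * K ^ 2) / ((1 - L) ^ 2 * (1 + L)) := by
    rw [eq_div_iff (by positivity)]
    field_simp
    ring_nf
  rw [e1, e2]
  have hnum : (0:ℝ) ≤ k * (1 - L) + K * L :=
    add_nonneg (mul_nonneg hk0 hu.le) (mul_nonneg hK0 hL0)
  rw [Real.le_sqrt (div_nonneg hnum hu.le) (by positivity), div_pow,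
    div_le_div_iff₀ (by positivity) (by positivity)]
  have h1 : 0 ≤ L * ((1 - L) ^ 3 * (1 + L)) * (k - K) ^ 2 := by positivity
  have h2 : 0 ≤ L * (1 - L) ^ 3 * K ^ 2 := by positivity
  nlinarith [h1, h2]

end Helpers

/-- consensus-error bound for Distributed-SGDA with a fixed step size,
in terms of the spectral gap of the mixing matrix. -/
theorem stmt_18 {dx dy m n K : ℕ} {Z : Fin m → Type*}
    (hm : 0 < m) (hn : 0 < n)
    (f : ∀ i, Vec dx → Vec dy → Z i → ℝ)
    (W : Matrix (Fin m) (Fin m) ℝ)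
    (hWsymm : W.IsSymm) (hWnonneg : ∀ i h, 0 ≤ W i h) (hWrow : ∀ i, ∑ h, W i h = 1)
    (lam : ℝ) (hlam : lam = specNorm (W - Pmat m)) (hlam1 : lam < 1)
    (G : ℝ) (hG : 0 < G)
    (hLip : GLip G f)
    (hdiff : ∀ i (ξ : Z i), Differentiable ℝ (fun p : Vec dx × Vec dy => f i p.1 p.2 ξ))
    (η : ℝ) (hηpos : 0 ≤ η)
    (j : ℕ → ℕ → Fin m → Fin n) (S : ∀ i, Fin n → Z i) :
    ∀ t k, 1 ≤ t → k ≤ K →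
      sgdaCons f S W (fun _ _ => η) K j t k
        ≤ η * G * Real.sqrt (1 / (1 - lam) * (k ^ 2 + 2 * lam / (1 - lam ^ 2) * K ^ 2)) := by
  intro t k ht hk
  have hG0 : 0 ≤ G := hG.le
  have hlam0 : 0 ≤ lam := by rw [hlam]; exact specNorm_nonneg _
  have hu : (0:ℝ) < 1 - lam := by linarith
  have hm' : ((m:ℝ)) ≠ 0 := by positivity
  have hgrad : ∀ (jj : Fin m → Fin n) (st : Fin m → Vec dx × Vec dy) (i : Fin m),
      ‖gradX (fun a b => f i a b (S i (jj i))) (st i).1 (st i).2‖ ^ 2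
        + ‖gradY (fun a b => f i a b (S i (jj i))) (st i).1 (st i).2‖ ^ 2 ≤ G ^ 2 :=
    fun jj st i => grad_bound hG0 _ (hdiff i _) (fun x y x' y' => hLip i _ x y x' y') _ _
  set η' : ℕ → ℕ → ℝ := fun _ _ => η with hη'
  have hlocal : ∀ (t' k' : ℕ), devQ (sgdaIter f S W η' K j t' k')
      ≤ devQ (sgdaIter f S W η' K j t' 0) + k' * (η * G * Real.sqrt m) := by
    intro t' k'
    induction k' with
    | zero => simp
    | succ k' ih =>
      have he : sgdaIter f S W η' K j t' (k' + 1)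
          = sgdaStep f S η (j t' k') (sgdaIter f S W η' K j t' k') := rfl
      rw [he]
      have h1 := devQ_step f S hηpos hG0 (j t' k') (sgdaIter f S W η' K j t' k')
        (hgrad (j t' k') _)
      push_cast
      nlinarith [Real.sqrt_nonneg (m:ℝ)]
  have hround : ∀ s : ℕ, devQ (sgdaIter f S W η' K j (s + 1) 0)
      ≤ η * G * Real.sqrt m * K * (lam / (1 - lam)) := by
    intro s
    have hrhs0 : 0 ≤ η * G * Real.sqrt m * K * (lam / (1 - lam)) := by
      have : 0 ≤ lam / (1 - lam) := div_nonneg hlam0 hu.le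
      positivity
    induction s with
    | zero =>
      have he : sgdaIter f S W η' K j 1 0 = (fun _ : Fin m => ((0,0) : Vec dx × Vec dy)) := rfl
      rw [he, devQ_zero_state]
      exact hrhs0
    | succ s ih =>
      have he : sgdaIter f S W η' K j (s + 2) 0
          = sgdaComm W (sgdaIter f S W η' K j (s + 1) K) := rfl
      rw [he]
      have h1 := devQ_comm hm W hWrow (sgdaIter f S W η' K j (s + 1) K)
      rw [← hlam] at h1
      have h2 := hlocal (s + 1) K
      have hlmul : lam * (η * G * Real.sqrt m * K * (lam / (1 - lam))
            + K * (η * G * Real.sqrt m))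
          = η * G * Real.sqrt m * K * (lam / (1 - lam)) := by
        field_simp
        ring
      calc devQ (sgdaComm W (sgdaIter f S W η' K j (s + 1) K))
          ≤ lam * devQ (sgdaIter f S W η' K j (s + 1) K) := h1
        _ ≤ lam * (η * G * Real.sqrt m * K * (lam / (1 - lam)) + K * (η * G * Real.sqrt m)) := by
            refine mul_le_mul_of_nonneg_left (h2.trans ?_) hlam0
            exact add_le_add_left ih _
        _ = η * G * Real.sqrt m * K * (lam / (1 - lam)) := hlmul
  obtain ⟨s, rfl⟩ : ∃ s, t = s + 1 := ⟨t - 1, (Nat.succ_pred_eq_of_pos ht).symm⟩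
  have hsm : Real.sqrt m * Real.sqrt m = (m:ℝ) := Real.mul_self_sqrt (by positivity)
  have hmain : sgdaCons f S W η' K j (s + 1) k
      ≤ η * G * ((k:ℝ) + (K:ℝ) * lam / (1 - lam)) := by
    have c1 := consensus_le_devQ (sgdaIter f S W η' K j (s + 1) k)
    have c2 := hlocal (s + 1) k
    have c3 := hround s
    have step1 : sgdaCons f S W η' K j (s + 1) k
        ≤ (m:ℝ)⁻¹ * Real.sqrt m * (η * G * Real.sqrt m * K * (lam / (1 - lam))
            + k * (η * G * Real.sqrt m)) := by
      refine c1.trans ?_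
      refine mul_le_mul_of_nonneg_left ?_ (by positivity)
      linarith
    have step2 : (m:ℝ)⁻¹ * Real.sqrt m * (η * G * Real.sqrt m * K * (lam / (1 - lam))
            + k * (η * G * Real.sqrt m))
        = η * G * ((k:ℝ) + (K:ℝ) * lam / (1 - lam)) := by
      have expand : (m:ℝ)⁻¹ * Real.sqrt m * (η * G * Real.sqrt m * K * (lam / (1 - lam))
            + k * (η * G * Real.sqrt m))
          = ((m:ℝ)⁻¹ * (Real.sqrt m * Real.sqrt m)) * (η * G * ((k:ℝ) + (K:ℝ) * lam / (1 - lam))) := by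
        ring
      rw [expand, hsm, inv_mul_cancel₀ hm', one_mul]
    exact step1.trans_eq step2
  refine hmain.trans ?_
  refine mul_le_mul_of_nonneg_left ?_ (by positivity)
  have hkK : (k:ℝ) ≤ (K:ℝ) := by exact_mod_cast hk
  exact alg_final lam (k:ℝ) (K:ℝ) hlam0 hlam1 (by positivity) hkK


end
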